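/- Let K(x) := |x|^{2-d} for d ≥ 3 (or K(x) := -log|x| for d = 2) on ℝ^d \ {0}. For any N ≥ 2 and pairwise distinct x^{(1)},...,x^{(N)} ∈ ℝ^d, one has ∑_{i,j,k: j≠i, k≠i} ⟨n(x^{(i)}-x^{(j)}), ∇K(x^{(i)}-x^{(k)})⟩ ≤ ∑_{i,j: j≠i} ⟨n(x^{(i)}-x^{(j)}), ∇K(x^{(i)}-x^{(j)})⟩, where n(u) := u/|u|. -/

import Mathlib

open Finset Real

section aux

variable {E : Type*} [NormedAddCommGroup E] [InnerProductSpace ℝ E]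

local notation "⟪" x ", " y "⟫" => @inner ℝ _ _ x y

lemma coulomb_hasFDerivAt_inner_self (u : E) :
    HasFDerivAt (fun v : E => (⟪v, v⟫ : ℝ)) (2 • (innerSL ℝ u)) u := by
  have h := (hasFDerivAt_id u).inner ℝ (hasFDerivAt_id u)
  refine h.congr_fderiv ?_
  ext w
  simp [fderivInnerCLM_apply, real_inner_comm, two_smul]

lemma coulomb_hasGradientAt_norm_rpow [CompleteSpace E] (α : ℝ) (u : E) (hu : u ≠ 0) :
    HasGradientAt (fun v : E => ‖v‖ ^ α) ((α * ‖u‖ ^ (α - 2)) • u) u := by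
  have hn : (0:ℝ) < ‖u‖ := norm_pos_iff.mpr hu
  have hq : (⟪u, u⟫ : ℝ) ≠ 0 := by
    rw [real_inner_self_eq_norm_sq]; positivity
  have h0 := coulomb_hasFDerivAt_inner_self u
  have h1 := HasDerivAt.comp_hasFDerivAt (f := fun v : E => (⟪v, v⟫ : ℝ)) u
    (Real.hasDerivAt_rpow_const (p := α / 2) (Or.inl hq)) h0
  have heq : (fun v : E => (⟪v, v⟫ : ℝ) ^ (α / 2)) = fun v : E => ‖v‖ ^ α := by
    funext v
    rw [real_inner_self_eq_norm_sq, ← Real.rpow_natCast (‖v‖) 2, ← Real.rpow_mul (norm_nonneg v)]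
    norm_num
    rw [show (2:ℝ) * (α / 2) = α by ring]
  simp only [Function.comp_def] at h1
  rw [heq] at h1
  rw [hasGradientAt_iff_hasFDerivAt]
  refine h1.congr_fderiv ?_
  ext w
  simp only [InnerProductSpace.toDual_apply_apply, ContinuousLinearMap.coe_smul', Pi.smul_apply,
    ContinuousLinearMap.coe_smul, innerSL_apply_apply, smul_eq_mul, real_inner_smul_left]
  rw [real_inner_self_eq_norm_sq, ← Real.rpow_natCast (‖u‖) 2, ← Real.rpow_mul (norm_nonneg u)]
  push_cast
  rw [show (2:ℝ) * (α / 2 - 1) = α - 2 by ring]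
  ring

lemma coulomb_hasGradientAt_neg_log_norm [CompleteSpace E] (u : E) (hu : u ≠ 0) :
    HasGradientAt (fun v : E => -Real.log ‖v‖) ((-1 * ‖u‖ ^ ((-2 : ℝ))) • u) u := by
  have hn : (0:ℝ) < ‖u‖ := norm_pos_iff.mpr hu
  have hq : (⟪u, u⟫ : ℝ) ≠ 0 := by
    rw [real_inner_self_eq_norm_sq]; positivity
  have h0 := coulomb_hasFDerivAt_inner_self u
  have h1 := (HasDerivAt.comp_hasFDerivAt (f := fun v : E => (⟪v, v⟫ : ℝ)) u
    (Real.hasDerivAt_log hq) h0).const_smul (-(1:ℝ)/2)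
  have heq : (fun v : E => (-(1:ℝ)/2) • Real.log (⟪v, v⟫ : ℝ)) = fun v : E => -Real.log ‖v‖ := by
    funext v
    rw [real_inner_self_eq_norm_sq, Real.log_pow]
    push_cast
    simp only [smul_eq_mul]
    ring
  simp only [Function.comp_def] at h1
  simp only [Pi.smul_def] at h1
  rw [heq] at h1
  rw [hasGradientAt_iff_hasFDerivAt]
  refine h1.congr_fderiv ?_
  ext w
  simp only [InnerProductSpace.toDual_apply_apply, ContinuousLinearMap.coe_smul', Pi.smul_apply,
    ContinuousLinearMap.coe_smul, innerSL_apply_apply, smul_eq_mul, real_inner_smul_left]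
  rw [real_inner_self_eq_norm_sq]
  rw [show ‖u‖ ^ ((-2:ℝ)) = (‖u‖^2)⁻¹ by
    rw [← Real.rpow_natCast (‖u‖) 2, ← Real.rpow_neg_one (‖u‖ ^ ((2:ℕ):ℝ)),
      ← Real.rpow_mul (norm_nonneg u)]; norm_num]
  field_simp
  ring

lemma coulomb_key_angle (u v : E) (hu : u ≠ 0) (hv : v ≠ 0) (huv : u ≠ v) :
    0 ≤ (⟪‖u‖⁻¹ • u, ‖v‖⁻¹ • v⟫ : ℝ) + ⟪‖u - v‖⁻¹ • (u - v), ‖v‖⁻¹ • (-v)⟫ := by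
  have ha : (0:ℝ) < ‖u‖ := norm_pos_iff.mpr hu
  have hb : (0:ℝ) < ‖v‖ := norm_pos_iff.mpr hv
  have hw : (0:ℝ) < ‖u - v‖ := norm_pos_iff.mpr (sub_ne_zero.mpr huv)
  have h1 : |‖u‖ - ‖u - v‖| ≤ ‖v‖ := by
    have := abs_norm_sub_norm_le u (u - v)
    simpa using this
  have h2 : |(⟪u, v⟫ : ℝ)| ≤ ‖u‖ * ‖v‖ := abs_real_inner_le_norm u v
  have key : (‖u‖ - ‖u - v‖) * (⟪u, v⟫ : ℝ) ≤ ‖u‖ * ‖v‖ ^ 2 := by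
    calc (‖u‖ - ‖u - v‖) * (⟪u, v⟫ : ℝ) ≤ |‖u‖ - ‖u - v‖| * |(⟪u, v⟫ : ℝ)| := by
          calc (‖u‖ - ‖u - v‖) * (⟪u, v⟫ : ℝ) ≤ |(‖u‖ - ‖u - v‖) * (⟪u, v⟫ : ℝ)| := le_abs_self _
          _ = |‖u‖ - ‖u - v‖| * |(⟪u, v⟫ : ℝ)| := abs_mul _ _
      _ ≤ ‖v‖ * (‖u‖ * ‖v‖) := mul_le_mul h1 h2 (abs_nonneg _) (norm_nonneg _)
      _ = ‖u‖ * ‖v‖ ^ 2 := by ring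
  simp only [real_inner_smul_left, real_inner_smul_right, inner_neg_right, inner_sub_left,
    real_inner_self_eq_norm_sq]
  set a := ‖u‖
  set b := ‖v‖
  set w := ‖u - v‖
  set t := (⟪u, v⟫ : ℝ) with ht
  have expand : b⁻¹ * (a⁻¹ * t) + b⁻¹ * -(w⁻¹ * (t - b ^ 2)) =
      (a * w * b)⁻¹ * ((w - a) * t + a * b ^ 2) := by
    field_simp
    ring
  rw [expand]
  apply mul_nonneg (inv_nonneg.mpr (by positivity))
  nlinarith [key]

end aux

open Finset in
theorem coulomb_interaction_triple_sum_le (d N : ℕ) (hd : 2 ≤ d) (hN : 2 ≤ N)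
    (K : EuclideanSpace ℝ (Fin d) → ℝ)
    (hK : (3 ≤ d ∧ ∀ u : EuclideanSpace ℝ (Fin d), u ≠ 0 → K u = ‖u‖ ^ ((2 : ℝ) - d)) ∨
          (d = 2 ∧ ∀ u : EuclideanSpace ℝ (Fin d), u ≠ 0 → K u = -Real.log ‖u‖))
    (x : Fin N → EuclideanSpace ℝ (Fin d)) (hx : Function.Injective x) :
    ∑ i : Fin N, ∑ j ∈ univ.filter (fun j => j ≠ i), ∑ k ∈ univ.filter (fun k => k ≠ i),
        (inner ℝ (‖x i - x j‖⁻¹ • (x i - x j)) (gradient K (x i - x k)) : ℝ)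
      ≤ ∑ i : Fin N, ∑ j ∈ univ.filter (fun j => j ≠ i),
        (inner ℝ (‖x i - x j‖⁻¹ • (x i - x j)) (gradient K (x i - x j)) : ℝ) := by
  classical
  -- the coefficient
  set c : ℝ := max 1 ((d : ℝ) - 2) with hc_def
  have hc : (0:ℝ) < c := lt_of_lt_of_le one_pos (le_max_left _ _)
  -- gradient formula
  have hgrad : ∀ u : EuclideanSpace ℝ (Fin d), u ≠ 0 → gradient K u = (-c * ‖u‖ ^ (-(d:ℝ))) • u := by
    intro u hu
    have hmem : ∀ᶠ v in nhds u, v ≠ 0 := by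
      exact IsOpen.eventually_mem isOpen_ne hu
    rcases hK with ⟨hd3, hKf⟩ | ⟨hd2, hKf⟩
    · have hc' : c = (d:ℝ) - 2 := by
        rw [hc_def]
        apply max_eq_right
        have : (3:ℝ) ≤ (d:ℝ) := by exact_mod_cast hd3
        linarith
      have hg := coulomb_hasGradientAt_norm_rpow ((2:ℝ) - d) u hu
      have hKg : HasGradientAt K ((((2:ℝ) - d) * ‖u‖ ^ (((2:ℝ) - d) - 2)) • u) u := by
        apply hg.congr_of_eventuallyEq
        filter_upwards [hmem] with v hv
        exact hKf v hv
      rw [hKg.gradient, hc']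
      congr 1
      rw [show ((2:ℝ)-(d:ℝ)) - 2 = -(d:ℝ) by ring]
      ring
    · subst hd2
      have hc' : c = 1 := by
        rw [hc_def]
        apply max_eq_left
        norm_num
      have hg := coulomb_hasGradientAt_neg_log_norm u hu
      have hKg : HasGradientAt K ((-1 * ‖u‖ ^ ((-2:ℝ))) • u) u := by
        apply hg.congr_of_eventuallyEq
        filter_upwards [hmem] with v hv
        exact hKf v hv
      rw [hKg.gradient, hc']
      norm_num
  -- distinctness of points
  have hne : ∀ i j : Fin N, j ≠ i → x i - x j ≠ 0 := by
    intro i j hij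
    exact sub_ne_zero.mpr fun h => hij (hx h.symm)
  -- the basic quantity
  set f : Fin N → Fin N → Fin N → ℝ := fun i j k =>
    ‖x i - x k‖ ^ ((1:ℝ) - d) *
      (inner ℝ (‖x i - x j‖⁻¹ • (x i - x j)) (‖x i - x k‖⁻¹ • (x i - x k)) : ℝ) with hf_def
  -- rewrite the inner products
  have hterm : ∀ i j k : Fin N, j ≠ i → k ≠ i →
      (inner ℝ (‖x i - x j‖⁻¹ • (x i - x j)) (gradient K (x i - x k)) : ℝ) = -c * f i j k := by
    intro i j k hj hk
    rw [hgrad _ (hne i k hk), hf_def]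
    simp only [real_inner_smul_right, real_inner_smul_left]
    have hb : (0:ℝ) < ‖x i - x k‖ := norm_pos_iff.mpr (hne i k hk)
    have : ‖x i - x k‖ ^ ((1:ℝ) - d) * ‖x i - x k‖⁻¹ = ‖x i - x k‖ ^ (-(d:ℝ)) := by
      rw [← Real.rpow_neg_one ‖x i - x k‖, ← Real.rpow_add hb]
      ring_nf
    linear_combination (c * ‖x i - x j‖⁻¹ * (inner ℝ (x i - x j) (x i - x k) : ℝ)) * this
  -- rewrite both sides in terms of f
  have hLHS : ∑ i : Fin N, ∑ j ∈ univ.filter (fun j => j ≠ i), ∑ k ∈ univ.filter (fun k => k ≠ i),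
      (inner ℝ (‖x i - x j‖⁻¹ • (x i - x j)) (gradient K (x i - x k)) : ℝ) =
      -c * ∑ i : Fin N, ∑ j ∈ univ.filter (fun j => j ≠ i), ∑ k ∈ univ.filter (fun k => k ≠ i),
        f i j k := by
    rw [Finset.mul_sum]
    refine Finset.sum_congr rfl fun i _ => ?_
    rw [Finset.mul_sum]
    refine Finset.sum_congr rfl fun j hj => ?_
    rw [Finset.mul_sum]
    refine Finset.sum_congr rfl fun k hk => ?_
    exact hterm i j k (Finset.mem_filter.mp hj).2 (Finset.mem_filter.mp hk).2
  have hRHS : ∑ i : Fin N, ∑ j ∈ univ.filter (fun j => j ≠ i),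
      (inner ℝ (‖x i - x j‖⁻¹ • (x i - x j)) (gradient K (x i - x j)) : ℝ) =
      -c * ∑ i : Fin N, ∑ j ∈ univ.filter (fun j => j ≠ i), f i j j := by
    rw [Finset.mul_sum]
    refine Finset.sum_congr rfl fun i _ => ?_
    rw [Finset.mul_sum]
    refine Finset.sum_congr rfl fun j hj => ?_
    exact hterm i j j (Finset.mem_filter.mp hj).2 (Finset.mem_filter.mp hj).2
  rw [hLHS, hRHS]
  -- it suffices to show B ≤ A
  have main : ∑ i : Fin N, ∑ j ∈ univ.filter (fun j => j ≠ i), f i j j ≤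
      ∑ i : Fin N, ∑ j ∈ univ.filter (fun j => j ≠ i), ∑ k ∈ univ.filter (fun k => k ≠ i),
        f i j k := by
    have hsplit : ∑ i : Fin N, ∑ j ∈ univ.filter (fun j => j ≠ i),
        ∑ k ∈ univ.filter (fun k => k ≠ i), f i j k =
        (∑ i : Fin N, ∑ j ∈ univ.filter (fun j => j ≠ i), f i j j) +
        ∑ i : Fin N, ∑ j ∈ univ.filter (fun j => j ≠ i),
          ∑ k ∈ (univ.filter (fun k => k ≠ i)).erase j, f i j k := by
      rw [← Finset.sum_add_distrib]
      refine Finset.sum_congr rfl fun i _ => ?_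
      rw [← Finset.sum_add_distrib]
      refine Finset.sum_congr rfl fun j hj => ?_
      exact (Finset.add_sum_erase _ _ hj).symm
    rw [hsplit]
    have hoff : (0:ℝ) ≤ ∑ i : Fin N, ∑ j ∈ univ.filter (fun j => j ≠ i),
        ∑ k ∈ (univ.filter (fun k => k ≠ i)).erase j, f i j k := by
      classical
      set D : Finset (Fin N × Fin N × Fin N) :=
        univ.filter (fun t => t.2.1 ≠ t.1 ∧ t.2.2 ≠ t.1 ∧ t.2.2 ≠ t.2.1) with hD_def
      set F : Fin N × Fin N × Fin N → ℝ := fun t => f t.1 t.2.1 t.2.2 with hF_def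
      have herase : ∀ i j : Fin N, (univ.filter (fun k => k ≠ i)).erase j =
          univ.filter (fun k => k ≠ i ∧ k ≠ j) := by
        intro i j
        ext k
        simp [Finset.mem_erase, and_comm]
      have hCD : ∑ i : Fin N, ∑ j ∈ univ.filter (fun j => j ≠ i),
          ∑ k ∈ (univ.filter (fun k => k ≠ i)).erase j, f i j k = ∑ t ∈ D, F t := by
        rw [hD_def, Finset.sum_filter, Fintype.sum_prod_type]
        simp only [Fintype.sum_prod_type]
        refine Finset.sum_congr rfl fun i _ => ?_
        simp only [herase, Finset.sum_filter]
        refine Finset.sum_congr rfl fun j _ => ?_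
        by_cases hj : j ≠ i
        · rw [if_pos hj]
          refine Finset.sum_congr rfl fun k _ => ?_
          split_ifs <;> first | rfl | tauto
        · rw [if_neg hj]
          symm
          refine Finset.sum_eq_zero fun k _ => ?_
          rw [if_neg]
          tauto
      rw [hCD]
      set σ : Fin N × Fin N × Fin N → Fin N × Fin N × Fin N := fun t => (t.2.2, t.2.1, t.1)
        with hσ_def
      have hmemD : ∀ t ∈ D, σ t ∈ D := by
        intro t ht
        rw [hD_def, Finset.mem_filter] at ht ⊢
        exact ⟨Finset.mem_univ _, ht.2.2.2.symm, ht.2.2.1.symm, ht.2.1.symm⟩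
      have hswap : ∑ t ∈ D, F (σ t) = ∑ t ∈ D, F t := by
        refine Finset.sum_nbij' σ σ hmemD hmemD ?_ ?_ ?_
        · intro a _; rfl
        · intro a _; rfl
        · intro a _; rfl
      have hpt : ∀ t ∈ D, 0 ≤ F t + F (σ t) := by
        intro t ht
        obtain ⟨i, j, k⟩ := t
        rw [hD_def, Finset.mem_filter] at ht
        obtain ⟨-, hj, hk, hkj⟩ := ht
        have hu : x i - x j ≠ 0 := hne i j hj
        have hv : x i - x k ≠ 0 := hne i k hk
        have huv : x i - x j ≠ x i - x k := by
          intro h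
          exact hkj (hx (sub_right_injective h)).symm
        have hkey := coulomb_key_angle (x i - x j) (x i - x k) hu hv huv
        have e1 : x k - x j = (x i - x j) - (x i - x k) := by abel
        have e2 : x k - x i = -(x i - x k) := by abel
        show 0 ≤ f i j k + f k j i
        rw [hf_def]
        simp only []
        rw [e1, e2, norm_neg]
        calc (0:ℝ) ≤ ‖x i - x k‖ ^ ((1:ℝ) - d) *
            ((inner ℝ (‖x i - x j‖⁻¹ • (x i - x j)) (‖x i - x k‖⁻¹ • (x i - x k)) : ℝ) +
             (inner ℝ (‖(x i - x j) - (x i - x k)‖⁻¹ • ((x i - x j) - (x i - x k)))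
               (‖x i - x k‖⁻¹ • (-(x i - x k))) : ℝ)) :=
              mul_nonneg (Real.rpow_nonneg (norm_nonneg _) _) hkey
          _ = _ := by ring
      have h2 : (0:ℝ) ≤ ∑ t ∈ D, (F t + F (σ t)) := Finset.sum_nonneg hpt
      rw [Finset.sum_add_distrib, hswap] at h2
      linarith
    linarith
  nlinarith [main, hc]
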